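/- If h : ℝ → ℝ is bounded, measurable, and strictly increasing on the interval [0, 1], and X is not ν-almost-everywhere equal to a constant, then ∫ h(X(y))·(X(y) − m) dν(y) > 0. -/

import Mathlib

open MeasureTheory

/-- If `h` is bounded, measurable and strictly increasing on
`[0,1]`, `ν` is a probability measure, `0 ≤ X ≤ 1` with mean `m = ∫ X dν`,
and `X` is not ν-a.e. equal to a constant, then
`∫ h(X(y))·(X(y) − m) dν(y) > 0`. -/
theorem covariance_pos (ν : Measure ℝ) [IsProbabilityMeasure ν]
    (X : ℝ → ℝ) (hXmeas : Measurable X) (hX : ∀ y, X y ∈ Set.Icc (0:ℝ) 1)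
    (h : ℝ → ℝ) (hhmeas : Measurable h) (hhbd : ∃ C : ℝ, ∀ x, |h x| ≤ C)
    (hhmono : StrictMonoOn h (Set.Icc (0:ℝ) 1))
    (hXnc : ¬ ∃ c : ℝ, ∀ᵐ y ∂ν, X y = c) :
    0 < ∫ y, h (X y) * (X y - ∫ z, X z ∂ν) ∂ν := by
  obtain ⟨C, hC⟩ := hhbd
  set m : ℝ := ∫ z, X z ∂ν with hm
  have hXint : Integrable X ν := by
    refine ⟨hXmeas.aestronglyMeasurable, ?_⟩
    refine HasFiniteIntegral.of_bounded (C := 1) ?_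
    filter_upwards with y
    rw [Real.norm_eq_abs, abs_le]
    exact ⟨by linarith [(hX y).1], (hX y).2⟩
  have hm01 : m ∈ Set.Icc (0:ℝ) 1 := by
    constructor
    · exact integral_nonneg fun y => (hX y).1
    · calc m ≤ ∫ _z, (1:ℝ) ∂ν := integral_mono hXint (integrable_const 1) fun y => (hX y).2
        _ = 1 := by simp
  set g : ℝ → ℝ := fun y => (h (X y) - h m) * (X y - m) with hg
  have hgnn : ∀ y, 0 ≤ g y := by
    intro y
    rcases lt_trichotomy (X y) m with hlt | heq | hgt
    · have := hhmono (hX y) hm01 hlt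
      exact mul_nonneg_of_nonpos_of_nonpos (by linarith) (by linarith)
    · simp [hg, heq]
    · have := hhmono hm01 (hX y) hgt
      exact mul_nonneg (by linarith) (by linarith)
  have hgmeas : Measurable g :=
    ((hhmeas.comp hXmeas).sub measurable_const).mul (hXmeas.sub measurable_const)
  have hgint : Integrable g ν := by
    refine ⟨hgmeas.aestronglyMeasurable, ?_⟩
    refine HasFiniteIntegral.of_bounded (C := 2 * C) ?_
    filter_upwards with y
    rw [Real.norm_eq_abs, hg]
    have h1 : |h (X y) - h m| ≤ 2 * C := by
      have := hC (X y); have := hC m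
      rw [abs_le] at *; constructor <;> linarith [this.1, this.2]
    have h2 : |X y - m| ≤ 1 := by
      rw [abs_le]; constructor <;> [linarith [(hX y).1, hm01.2]; linarith [(hX y).2, hm01.1]]
    calc |(h (X y) - h m) * (X y - m)| = |h (X y) - h m| * |X y - m| := abs_mul _ _
      _ ≤ (2 * C) * 1 := by
          apply mul_le_mul h1 h2 (abs_nonneg _)
          linarith [abs_nonneg (h (X y) - h m)]
      _ = 2 * C := by ring
  have hgne : ¬ (g =ᵐ[ν] 0) := by
    intro hg0
    apply hXnc
    refine ⟨m, ?_⟩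
    filter_upwards [hg0] with y hy
    by_contra hne
    have hx : X y - m ≠ 0 := sub_ne_zero.mpr hne
    have hh : h (X y) - h m ≠ 0 := by
      intro hz
      rcases lt_or_gt_of_ne hne with hlt | hgt
      · exact absurd hz (by have := hhmono (hX y) hm01 hlt; linarith)
      · exact absurd hz (by have := hhmono hm01 (hX y) hgt; linarith)
    exact (mul_ne_zero hh hx) hy
  have hgpos : 0 < ∫ y, g y ∂ν := by
    rcases lt_or_eq_of_le (integral_nonneg (show 0 ≤ g from hgnn)) with hlt | heq
    · exact hlt
    · exfalso
      apply hgne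
      exact (integral_eq_zero_iff_of_nonneg (show 0 ≤ g from hgnn) hgint).mp heq.symm
  have key : (fun y => h (X y) * (X y - m)) = fun y => g y + h m * (X y - m) := by
    funext y; simp only [hg]; ring
  have hXmint : Integrable (fun y => X y - m) ν := hXint.sub (integrable_const m)
  have hzero : ∫ y, h m * (X y - m) ∂ν = 0 := by
    rw [integral_const_mul, integral_sub hXint (integrable_const m)]
    simp [← hm]
  rw [show (∫ y, h (X y) * (X y - ∫ z, X z ∂ν) ∂ν) = ∫ y, g y + h m * (X y - m) ∂ν from by
    rw [← hm, key],
    integral_add hgint (hXmint.const_mul _), hzero, add_zero]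
  exact hgpos
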